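/- (I-concurrence Theorem) Let N ≥ 2 and 1 ≤ k ≤ ⌊N/2⌋. Let the time-evolved N-body state be the unit vector ψ_t : {0,1}^N → ℂ with ψ_t(J) = 2^{−N/2}·exp(i·t·Σ_{p<q} φ_{pq}(J_p,J_q)), and let ρ(t) be the 2^k × 2^k reduced density matrix of the first k qubits, with entries ρ(t)_{xy} = Σ_{j ∈ {0,1}^{N−k}} ψ_t(x⌢j)·conj(ψ_t(y⌢j)) for x, y ∈ {0,1}^k. Then the squared I-concurrence across the bipartition (1,…,k)|(k+1,…,N) satisfies 2·(1 − Σ_{x,y}|ρ(t)_{xy}|²) = (2^k − 1)/2^{k−1} − 2^{2−k}·Λ(t), where Λ(t) = Σ_{l=1}^{k} 2^{−l} · Σ_{A ⊆ {1,…,k}, |A| = l, A = {a_1 < … < a_l}} Σ_{(s_1,…,s_{l−1}) ∈ {0,1}^{l−1}} Π_{b=k+1}^{N} cos²( (t/2)·(Φ_{a_1 b} + Σ_{i=1}^{l−1} (−1)^{s_i}·Φ_{a_{i+1} b}) ), and Φ_{ab} = φ_{ab}(0,1) + φ_{ab}(1,0) − φ_{ab}(0,0) − φ_{ab}(1,1)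 is the signed entangling phase of the pair (a,b). -/

import Mathlib

open Real

namespace QGEMAux

variable {k m : ℕ}

noncomputable def G (m : ℕ) (t : ℝ) (θ : Fin m → ℝ) : ℝ := ∏ b, Real.cos ((t / 2) * θ b) ^ 2

lemma G_congr (t : ℝ) {θ η : Fin m → ℝ} (h : ∀ b, θ b = η b) : G m t θ = G m t η := by
  unfold G; exact Finset.prod_congr rfl fun b _ => by rw [h b]

lemma G_neg (t : ℝ) (θ : Fin m → ℝ) : G m t (fun b => -θ b) = G m t θ := by
  unfold G; exact Finset.prod_congr rfl fun b _ => by rw [mul_neg, Real.cos_neg]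

def sgn (b : Bool) : ℝ := if b then -1 else 1

lemma sgn_not (b : Bool) : sgn (!b) = -sgn b := by cases b <;> simp [sgn]

def bnot : Bool ≃ Bool := ⟨fun b => !b, fun b => !b, fun b => Bool.not_not b, fun b => Bool.not_not b⟩

lemma sign_split {L : ℕ} (t : ℝ) (w : Fin (L + 1) → Fin m → ℝ) :
    ∑ τ : Fin (L + 1) → Bool, G m t (fun b => ∑ i, sgn (τ i) * w i b) =
      2 * ∑ s : Fin L → Bool, G m t (fun b => w 0 b + ∑ i : Fin L, sgn (s i) * w i.succ b) := by
  rw [← Equiv.sum_comp (Fin.consEquiv fun _ : Fin (L + 1) => Bool)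
    (fun τ => G m t (fun b => ∑ i, sgn (τ i) * w i b))]
  rw [Fintype.sum_prod_type, Fintype.sum_bool]
  have hfalse : ∀ s : Fin L → Bool,
      (G m t fun b => ∑ i, sgn (Fin.consEquiv (fun _ => Bool) (false, s) i) * w i b)
        = G m t fun b => w 0 b + ∑ i : Fin L, sgn (s i) * w i.succ b := by
    intro s; refine G_congr t fun b => ?_
    rw [Fin.sum_univ_succ]
    simp [sgn, Fin.consEquiv]
  have htrue : (∑ s : Fin L → Bool,
      G m t fun b => ∑ i, sgn (Fin.consEquiv (fun _ => Bool) (true, s) i) * w i b)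
      = ∑ s : Fin L → Bool, G m t fun b => w 0 b + ∑ i : Fin L, sgn (s i) * w i.succ b := by
    rw [← Equiv.sum_comp (Equiv.arrowCongr (Equiv.refl (Fin L)) bnot)
      (fun s => G m t fun b => ∑ i, sgn (Fin.consEquiv (fun _ => Bool) (true, s) i) * w i b)]
    refine Fintype.sum_congr _ _ fun s => ?_
    have harg : (fun b => ∑ i, sgn (Fin.consEquiv (fun _ => Bool)
          (true, Equiv.arrowCongr (Equiv.refl (Fin L)) bnot s) i) * w i b)
        = fun b => -((fun b => w 0 b + ∑ i : Fin L, sgn (s i) * w i.succ b) b) := by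
      funext b
      rw [Fin.sum_univ_succ]
      simp only [Fin.consEquiv, Equiv.coe_fn_mk, Fin.cons_zero, Fin.cons_succ, sgn,
        Equiv.arrowCongr_apply, Equiv.coe_refl, Function.comp]
      push_cast
      rw [neg_add, ← Finset.sum_neg_distrib]
      congr 1
      · ring
      · refine Finset.sum_congr rfl fun i _ => ?_
        simp [bnot]
        cases s i <;> simp
    rw [harg, G_neg t]
  rw [htrue]
  rw [Finset.sum_congr rfl fun s _ => hfalse s]
  ring


noncomputable def F (t : ℝ) (Φ : Fin k → Fin m → ℝ) (p : Fin k → Fin 2 × Fin 2) : ℝ :=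
  G m t fun b => ∑ a, ((((p a).2 : ℕ) : ℝ) - (((p a).1 : ℕ) : ℝ)) * Φ a b

def supp (p : Fin k → Fin 2 × Fin 2) : Finset (Fin k) :=
  Finset.univ.filter fun a => (p a).1 ≠ (p a).2

def Psi (A : Finset (Fin k)) (q : Fin k → Bool) : Fin k → Fin 2 × Fin 2 := fun a =>
  if a ∈ A then (if q a then (1, 0) else (0, 1)) else (if q a then (1, 1) else (0, 0))

lemma supp_Psi (A : Finset (Fin k)) (q : Fin k → Bool) : supp (Psi A q) = A := by
  ext a
  by_cases ha : a ∈ A <;> cases hq : q a <;>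
    simp only [supp, Finset.mem_filter, Finset.mem_univ, true_and] <;> simp [Psi, ha, hq]

lemma Psi_inj (A : Finset (Fin k)) : Function.Injective (Psi A) := by
  intro q q' hqq
  funext a
  have h := congrFun hqq a
  by_cases ha : a ∈ A <;> cases hq : q a <;> cases hq' : q' a <;>
    simp_all [Psi]

lemma fiber_eq (A : Finset (Fin k)) :
    Finset.univ.filter (fun p => supp p = A) = Finset.univ.image (Psi A) := by
  ext p
  simp only [Finset.mem_filter, Finset.mem_univ, true_and, Finset.mem_image]
  constructor
  · intro hp
    refine ⟨fun a => decide ((p a).1 = 1), ?_⟩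
    funext a
    have ha : a ∈ A ↔ (p a).1 ≠ (p a).2 := by rw [← hp]; simp [supp]
    rcases hu : p a with ⟨u, v⟩
    rw [hu] at ha
    fin_cases u <;> fin_cases v <;> by_cases h : a ∈ A <;>
      simp_all [Psi]
  · rintro ⟨q, rfl⟩; exact supp_Psi A q


lemma fiber_sum (t : ℝ) (Φ : Fin k → Fin m → ℝ) (A : Finset (Fin k)) {L : ℕ}
    (h : A.card = L) :
    ∑ p ∈ Finset.univ.filter (fun p => supp p = A), F t Φ p =
      2 ^ (k - L) * ∑ τ : Fin L → Bool,
        G m t fun b => ∑ i, sgn (τ i) * Φ (A.orderEmbOfFin h i) b := by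
  classical
  rw [fiber_eq, Finset.sum_image (fun q _ q' _ hqq => Psi_inj A hqq)]
  have hF : ∀ q, F t Φ (Psi A q) = G m t fun b => ∑ a ∈ A, sgn (q a) * Φ a b := by
    intro q
    refine G_congr t fun b => ?_
    rw [← Finset.sum_subset (Finset.subset_univ A)
      (f := fun a => ((((Psi A q a).2 : ℕ) : ℝ) - (((Psi A q a).1 : ℕ) : ℝ)) * Φ a b)
      (by intro a _ ha; cases hq : q a <;> simp [Psi, ha, hq])]
    refine Finset.sum_congr rfl fun a ha => ?_
    cases hq : q a <;> simp [Psi, ha, hq, sgn]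
  rw [Finset.sum_congr rfl fun q _ => hF q]
  -- split into values on A and off A
  rw [← Equiv.sum_comp (Equiv.piEquivPiSubtypeProd (fun a => a ∈ A) fun _ => Bool).symm
    (fun q => G m t fun b => ∑ a ∈ A, sgn (q a) * Φ a b)]
  rw [Fintype.sum_prod_type]
  have key : ∀ (f : {a // a ∈ A} → Bool) (g : {a // ¬ a ∈ A} → Bool),
      (G m t fun b => ∑ a ∈ A,
        sgn ((Equiv.piEquivPiSubtypeProd (fun a => a ∈ A) fun _ => Bool).symm (f, g) a) * Φ a b)
      = G m t fun b => ∑ i : Fin L, sgn (f (A.orderIsoOfFin h i)) * Φ (A.orderEmbOfFin h i) b := by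
    intro f g
    refine G_congr t fun b => ?_
    rw [← Finset.sum_attach A (fun a =>
      sgn ((Equiv.piEquivPiSubtypeProd (fun a => a ∈ A) fun _ => Bool).symm (f, g) a) * Φ a b)]
    rw [← Finset.univ_eq_attach]
    rw [← Equiv.sum_comp (A.orderIsoOfFin h).toEquiv (fun x =>
      sgn ((Equiv.piEquivPiSubtypeProd (fun a => a ∈ A) fun _ => Bool).symm (f, g) ↑x) * Φ ↑x b)]
    refine Finset.sum_congr rfl fun i _ => ?_
    simp only [RelIso.coe_fn_toEquiv, Finset.coe_orderIsoOfFin_apply]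
    congr 1
    have hmem := A.orderEmbOfFin_mem h i
    simp only [Equiv.piEquivPiSubtypeProd, Equiv.coe_fn_symm_mk, hmem, dif_pos]
    have heq : (⟨(A.orderEmbOfFin h) i, hmem⟩ : {a // a ∈ A}) = (A.orderIsoOfFin h) i :=
      Subtype.ext (Finset.coe_orderIsoOfFin_apply A h i).symm
    rw [heq]
  simp only [key]
  simp only [Finset.sum_const, nsmul_eq_mul, Finset.card_univ]
  rw [← Finset.mul_sum]
  have hcard : (Fintype.card ({a // a ∉ A} → Bool) : ℝ) = 2 ^ (k - L) := by
    rw [Fintype.card_fun, Fintype.card_bool, Fintype.card_subtype_compl]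
    simp [h]
  rw [hcard]
  congr 1
  refine Fintype.sum_equiv
    (Equiv.arrowCongr (A.orderIsoOfFin h).toEquiv.symm (Equiv.refl Bool)) _ _ fun f => ?_
  refine G_congr t fun b => ?_
  refine Finset.sum_congr rfl fun i _ => ?_
  simp [Equiv.arrowCongr]

lemma comb_sum (t : ℝ) (Φ : Fin k → Fin m → ℝ) :
    ∑ p : Fin k → Fin 2 × Fin 2, F t Φ p =
      2 ^ k * (1 + 2 * ∑ l ∈ Finset.range k, ((2 : ℝ) ^ (l + 1))⁻¹ *
        ∑ A ∈ Finset.powersetCard (l + 1) (Finset.univ : Finset (Fin k)),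
          (if h : A.card = l + 1 then
            ∑ s : Fin l → Bool, ∏ b : Fin m,
              Real.cos ((t / 2) * (Φ (A.orderEmbOfFin h 0) b +
                ∑ i : Fin l, (if s i then (-1 : ℝ) else 1) * Φ (A.orderEmbOfFin h i.succ) b)) ^ 2
           else 0)) := by
  classical
  rw [← Finset.sum_fiberwise_of_maps_to (g := supp)
    (fun p _ => Finset.mem_powerset.2 (Finset.subset_univ (supp p))) (F t Φ)]
  rw [Finset.sum_powerset]
  rw [show ((Finset.univ : Finset (Fin k)).card) = k by simp]
  rw [Finset.sum_range_succ']
  have h0 : ∑ A ∈ Finset.powersetCard 0 (Finset.univ : Finset (Fin k)),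
      ∑ p ∈ Finset.univ.filter (fun p => supp p = A), F t Φ p = 2 ^ k := by
    rw [Finset.powersetCard_zero, Finset.sum_singleton]
    rw [fiber_sum t Φ ∅ Finset.card_empty]
    simp [G]
  rw [h0]
  have hl : ∀ l ∈ Finset.range k,
      (∑ A ∈ Finset.powersetCard (l + 1) (Finset.univ : Finset (Fin k)),
        ∑ p ∈ Finset.univ.filter (fun p => supp p = A), F t Φ p)
      = 2 ^ k * 2 * (((2 : ℝ) ^ (l + 1))⁻¹ *
        ∑ A ∈ Finset.powersetCard (l + 1) (Finset.univ : Finset (Fin k)),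
          (if h : A.card = l + 1 then
            ∑ s : Fin l → Bool, ∏ b : Fin m,
              Real.cos ((t / 2) * (Φ (A.orderEmbOfFin h 0) b +
                ∑ i : Fin l, (if s i then (-1 : ℝ) else 1) * Φ (A.orderEmbOfFin h i.succ) b)) ^ 2
           else 0)) := by
    intro l hlk
    rw [Finset.mul_sum, Finset.mul_sum]
    refine Finset.sum_congr rfl fun A hA => ?_
    have hcard : A.card = l + 1 := (Finset.mem_powersetCard.1 hA).2
    rw [fiber_sum t Φ A hcard]
    rw [sign_split t (fun i b => Φ (A.orderEmbOfFin hcard i) b)]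
    rw [dif_pos hcard]
    have hGs : (∑ s : Fin l → Bool, G m t fun b =>
        Φ (A.orderEmbOfFin hcard 0) b + ∑ i : Fin l, sgn (s i) * Φ (A.orderEmbOfFin hcard i.succ) b)
        = ∑ s : Fin l → Bool, ∏ b : Fin m,
            Real.cos ((t / 2) * (Φ (A.orderEmbOfFin hcard 0) b +
              ∑ i : Fin l, (if s i then (-1 : ℝ) else 1) * Φ (A.orderEmbOfFin hcard i.succ) b)) ^ 2 := by
      refine Finset.sum_congr rfl fun s _ => ?_
      simp [G, sgn]
    rw [hGs]
    have hpow : (2 : ℝ) ^ (k - (l + 1)) * 2 = 2 ^ k * 2 * ((2 : ℝ) ^ (l + 1))⁻¹ := by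
      have hle : l + 1 ≤ k := Finset.mem_range.1 hlk
      have h2 : (2 : ℝ) ^ (k - (l + 1)) * (2 : ℝ) ^ (l + 1) = 2 ^ k := by
        rw [← pow_add]; congr 1; omega
      have hne : ((2 : ℝ) ^ (l + 1)) ≠ 0 := by positivity
      rw [← h2]
      field_simp
    rw [← mul_assoc, hpow]
    ring
  rw [Finset.sum_congr rfl hl]
  have hfin : ∀ Sf : ℕ → ℝ, (∑ l ∈ Finset.range k, 2 ^ k * 2 * Sf l) + 2 ^ k =
      2 ^ k * (1 + 2 * ∑ l ∈ Finset.range k, Sf l) := by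
    intro Sf; rw [← Finset.mul_sum]; ring
  exact hfin _

lemma abs_exp_add_exp (α β : ℝ) :
    ‖Complex.exp (Complex.I * α) + Complex.exp (Complex.I * β)‖ ^ 2 =
      2 + 2 * Real.cos (β - α) := by
  rw [Complex.sq_norm]
  rw [mul_comm Complex.I ((α : ℂ)), mul_comm Complex.I ((β : ℂ))]
  rw [Complex.exp_mul_I, Complex.exp_mul_I]
  rw [Complex.normSq_apply]
  simp only [Complex.add_re, Complex.add_im, Complex.mul_re, Complex.mul_im,
    Complex.I_re, Complex.I_im, Complex.cos_ofReal_re, Complex.sin_ofReal_re,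
    Complex.cos_ofReal_im, Complex.sin_ofReal_im]
  ring_nf
  rw [Real.cos_sub]
  nlinarith [Real.sin_sq_add_cos_sq α, Real.sin_sq_add_cos_sq β]

lemma castAdd_lt_natAdd (a : Fin k) (b : Fin m) : Fin.castAdd m a < Fin.natAdd k b := by
  rw [Fin.lt_def]
  simp only [Fin.coe_castAdd, Fin.coe_natAdd]
  omega

lemma not_natAdd_lt_castAdd (a : Fin k) (b : Fin m) : ¬ Fin.natAdd k b < Fin.castAdd m a := by
  rw [Fin.lt_def]
  simp only [Fin.coe_castAdd, Fin.coe_natAdd]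
  omega


lemma rho_abs_sq (φ : Fin (k + m) → Fin (k + m) → Fin 2 → Fin 2 → ℝ) (t : ℝ)
    (phiJ : (Fin (k + m) → Fin 2) → ℝ)
    (hphiJ : ∀ J, phiJ J = ∑ p, ∑ q, if p < q then φ p q (J p) (J q) else 0)
    (ψ : (Fin (k + m) → Fin 2) → ℂ)
    (hψ : ∀ J, ψ J = Complex.ofReal (1 / Real.sqrt (2 ^ (k + m))) *
      Complex.exp (Complex.I * Complex.ofReal (t * phiJ J)))
    (ρ : (Fin k → Fin 2) → (Fin k → Fin 2) → ℂ)
    (hρ : ∀ x y, ρ x y = ∑ j : Fin m → Fin 2,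
      ψ (Fin.append x j) * (starRingEnd ℂ) (ψ (Fin.append y j)))
    (Φ : Fin k → Fin m → ℝ)
    (hΦ : ∀ a b, Φ a b =
      φ (Fin.castAdd m a) (Fin.natAdd k b) 0 1 +
      φ (Fin.castAdd m a) (Fin.natAdd k b) 1 0 -
      φ (Fin.castAdd m a) (Fin.natAdd k b) 0 0 -
      φ (Fin.castAdd m a) (Fin.natAdd k b) 1 1)
    (x y : Fin k → Fin 2) :
    ‖ρ x y‖ ^ 2 =
      ((4 : ℝ) ^ k)⁻¹ *
        G m t (fun b => ∑ a, (((y a : ℕ) : ℝ) - ((x a : ℕ) : ℝ)) * Φ a b) := by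
  classical
  set W : (Fin k → Fin 2) → ℝ := fun z => ∑ a, ∑ a', if (Fin.castAdd m a) < (Fin.castAdd m a')
    then φ (Fin.castAdd m a) (Fin.castAdd m a') (z a) (z a') else 0 with hW
  set V : (Fin m → Fin 2) → ℝ := fun j => ∑ b, ∑ b', if (Fin.natAdd k b) < (Fin.natAdd k b')
    then φ (Fin.natAdd k b) (Fin.natAdd k b') (j b) (j b') else 0 with hV
  have hcross : ∀ (z : Fin k → Fin 2) (j : Fin m → Fin 2),
      phiJ (Fin.append z j) = W z + V j +
        ∑ b, ∑ a, φ (Fin.castAdd m a) (Fin.natAdd k b) (z a) (j b) := by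
    intro z j
    rw [hphiJ]
    simp only [Fin.sum_univ_add, Fin.append_left, Fin.append_right]
    simp only [castAdd_lt_natAdd, not_natAdd_lt_castAdd, if_true, if_false,
      Finset.sum_const_zero, add_zero, zero_add]
    have hc : (∑ b : Fin m, ∑ a : Fin k, φ (Fin.castAdd m a) (Fin.natAdd k b) (z a) (j b))
        = ∑ a : Fin k, ∑ b : Fin m, φ (Fin.castAdd m a) (Fin.natAdd k b) (z a) (j b) :=
      Finset.sum_comm
    simp only [hW, hV]
    rw [hc, Finset.sum_add_distrib]
    ring
  set d : Fin m → Fin 2 → ℝ := fun b u => ∑ a,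
    (φ (Fin.castAdd m a) (Fin.natAdd k b) (x a) u -
     φ (Fin.castAdd m a) (Fin.natAdd k b) (y a) u) with hd
  have hdiff : ∀ j : Fin m → Fin 2,
      phiJ (Fin.append x j) - phiJ (Fin.append y j) = (W x - W y) + ∑ b, d b (j b) := by
    intro j
    rw [hcross x j, hcross y j, hd]
    simp only [Finset.sum_sub_distrib]
    ring
  have hrho2 : ρ x y = (Complex.ofReal ((2 : ℝ) ^ (k + m)))⁻¹ *
      (Complex.exp (Complex.I * Complex.ofReal (t * (W x - W y))) *
        ∏ b, ∑ u : Fin 2, Complex.exp (Complex.I * Complex.ofReal (t * d b u))) := by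
    rw [hρ]
    have hterm : ∀ j : Fin m → Fin 2,
        ψ (Fin.append x j) * (starRingEnd ℂ) (ψ (Fin.append y j)) =
          (Complex.ofReal ((2 : ℝ) ^ (k + m)))⁻¹ *
            (Complex.exp (Complex.I * Complex.ofReal (t * (W x - W y))) *
              ∏ b, Complex.exp (Complex.I * Complex.ofReal (t * d b (j b)))) := by
      intro j
      rw [hψ, hψ, map_mul, Complex.conj_ofReal, ← Complex.exp_conj, map_mul, Complex.conj_I,
        Complex.conj_ofReal]
      have hr : (Complex.ofReal (1 / Real.sqrt (2 ^ (k + m)))) *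
          (Complex.ofReal (1 / Real.sqrt (2 ^ (k + m)))) =
          (Complex.ofReal ((2 : ℝ) ^ (k + m)))⁻¹ := by
        rw [← Complex.ofReal_mul, div_mul_div_comm, one_mul,
          Real.mul_self_sqrt (by positivity), ← Complex.ofReal_inv, one_div]
      have hexp : Complex.exp (Complex.I * Complex.ofReal (t * phiJ (Fin.append x j))) *
          Complex.exp (-Complex.I * Complex.ofReal (t * phiJ (Fin.append y j))) =
          Complex.exp (Complex.I * Complex.ofReal (t * (W x - W y))) *
            ∏ b, Complex.exp (Complex.I * Complex.ofReal (t * d b (j b))) := by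
        have harg : Complex.I * Complex.ofReal (t * phiJ (Fin.append x j)) +
            -Complex.I * Complex.ofReal (t * phiJ (Fin.append y j)) =
            Complex.I * Complex.ofReal
              (t * (phiJ (Fin.append x j) - phiJ (Fin.append y j))) := by
          push_cast
          ring
        conv_lhs => rw [← Complex.exp_add]
        conv_rhs => rw [← Complex.exp_sum, ← Complex.exp_add]
        rw [harg, hdiff j]
        congr 1
        push_cast
        have hsum' : Complex.I * ((t : ℂ) * ∑ b : Fin m, ((d b (j b) : ℝ) : ℂ)) =
            ∑ b : Fin m, Complex.I * ((t : ℂ) * ((d b (j b) : ℝ) : ℂ)) := by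
          rw [Finset.mul_sum, Finset.mul_sum]
        rw [← hsum']
        ring
      calc Complex.ofReal (1 / Real.sqrt (2 ^ (k + m))) *
            Complex.exp (Complex.I * Complex.ofReal (t * phiJ (Fin.append x j))) *
            (Complex.ofReal (1 / Real.sqrt (2 ^ (k + m))) *
              Complex.exp (-Complex.I * Complex.ofReal (t * phiJ (Fin.append y j))))
          = (Complex.ofReal (1 / Real.sqrt (2 ^ (k + m))) *
              Complex.ofReal (1 / Real.sqrt (2 ^ (k + m)))) *
            (Complex.exp (Complex.I * Complex.ofReal (t * phiJ (Fin.append x j))) *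
              Complex.exp (-Complex.I * Complex.ofReal (t * phiJ (Fin.append y j)))) := by ring
        _ = _ := by rw [hr, hexp]
    rw [Finset.sum_congr rfl fun j _ => hterm j]
    rw [← Finset.mul_sum]
    congr 1
    rw [← Finset.mul_sum]
    congr 1
    rw [← Fintype.prod_sum (f := fun b u => Complex.exp (Complex.I * Complex.ofReal (t * d b u)))]
  have hd10 : ∀ b, d b 1 - d b 0 = ∑ a, (((y a : ℕ) : ℝ) - ((x a : ℕ) : ℝ)) * Φ a b := by
    intro b
    rw [hd]
    rw [← Finset.sum_sub_distrib]
    refine Finset.sum_congr rfl fun a _ => ?_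
    have key : ∀ u v : Fin 2,
        φ (Fin.castAdd m a) (Fin.natAdd k b) u 1 - φ (Fin.castAdd m a) (Fin.natAdd k b) v 1 -
          (φ (Fin.castAdd m a) (Fin.natAdd k b) u 0 - φ (Fin.castAdd m a) (Fin.natAdd k b) v 0)
          = (((v : ℕ) : ℝ) - ((u : ℕ) : ℝ)) * Φ a b := by
      intro u v
      fin_cases u <;> fin_cases v <;> simp [hΦ] <;> ring
    exact key (x a) (y a)
  rw [hrho2]
  rw [norm_mul, norm_mul, norm_inv, Complex.norm_real, Real.norm_eq_abs, Complex.norm_exp]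
  have hre : (Complex.I * Complex.ofReal (t * (W x - W y))).re = 0 := by simp
  rw [hre, Real.exp_zero, one_mul]
  rw [norm_prod]
  have habs2 : |(2 : ℝ) ^ (k + m)| = (2 : ℝ) ^ (k + m) := abs_of_pos (by positivity)
  rw [habs2]
  rw [mul_pow, inv_pow, ← Finset.prod_pow]
  have hper : ∀ b : Fin m, ‖∑ u : Fin 2,
      Complex.exp (Complex.I * Complex.ofReal (t * d b u))‖ ^ 2 =
      4 * Real.cos ((t / 2) * ∑ a, (((y a : ℕ) : ℝ) - ((x a : ℕ) : ℝ)) * Φ a b) ^ 2 := by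
    intro b
    rw [Fin.sum_univ_two]
    rw [abs_exp_add_exp (t * d b 0) (t * d b 1)]
    have harg2 : (t / 2) * ∑ a, (((y a : ℕ) : ℝ) - ((x a : ℕ) : ℝ)) * Φ a b
        = (t * d b 1 - t * d b 0) / 2 := by rw [← hd10 b]; ring
    rw [harg2]
    have hcs := Real.cos_sq ((t * d b 1 - t * d b 0) / 2)
    have : 2 * ((t * d b 1 - t * d b 0) / 2) = t * d b 1 - t * d b 0 := by ring
    rw [this] at hcs
    rw [hcs]
    ring
  rw [Finset.prod_congr rfl fun b _ => hper b]
  rw [Finset.prod_mul_distrib, Finset.prod_const, Finset.card_univ, Fintype.card_fin]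
  unfold G
  have hconst : (((2 : ℝ) ^ (k + m)) ^ 2)⁻¹ * ((4 : ℝ) ^ m *
      ∏ b, Real.cos ((t / 2) * ∑ a, (((y a : ℕ) : ℝ) - ((x a : ℕ) : ℝ)) * Φ a b) ^ 2)
      = ((4 : ℝ) ^ k)⁻¹ *
        ∏ b, Real.cos ((t / 2) * ∑ a, (((y a : ℕ) : ℝ) - ((x a : ℕ) : ℝ)) * Φ a b) ^ 2 := by
    have h4 : (((2 : ℝ) ^ (k + m)) ^ 2) = 4 ^ k * 4 ^ m := by
      rw [← pow_mul]
      rw [show (4 : ℝ) = 2 ^ 2 by norm_num, ← pow_mul, ← pow_mul, ← pow_add]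
      congr 1
      ring
    rw [h4]
    have h40 : ((4 : ℝ) ^ k) ≠ 0 := by positivity
    have h41 : ((4 : ℝ) ^ m) ≠ 0 := by positivity
    field_simp
  rw [← hconst]

end QGEMAux

open Real

/-- (I-concurrence theorem) Writing `N = k + m` with `1 ≤ k ≤ ⌊N/2⌋`, the
squared I-concurrence of the time-evolved N-body QGEM state across the
bipartition of the first `k` qubits versus the rest equals
`(2^k − 1)/2^{k−1} − 2^{2−k}·Λ(t)`, where `Λ(t)` is the stated sum over
subsets `A = {a_1 < … < a_l}` of the first part and sign choices, of products
of `cos²((t/2)(Φ_{a_1 b} ± Φ_{a_2 b} ± …))` over the second part. -/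
theorem N_body_I_concurrence (k m : ℕ) (hk : 1 ≤ k) (hN : 2 ≤ k + m)
    (hkhalf : k ≤ (k + m) / 2)
    (φ : Fin (k + m) → Fin (k + m) → Fin 2 → Fin 2 → ℝ) (t : ℝ)
    (phiJ : (Fin (k + m) → Fin 2) → ℝ)
    (hphiJ : ∀ J, phiJ J = ∑ p, ∑ q, if p < q then φ p q (J p) (J q) else 0)
    (ψ : (Fin (k + m) → Fin 2) → ℂ)
    (hψ : ∀ J, ψ J = Complex.ofReal (1 / Real.sqrt (2 ^ (k + m))) *
      Complex.exp (Complex.I * Complex.ofReal (t * phiJ J)))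
    (ρ : (Fin k → Fin 2) → (Fin k → Fin 2) → ℂ)
    (hρ : ∀ x y, ρ x y = ∑ j : Fin m → Fin 2,
      ψ (Fin.append x j) * (starRingEnd ℂ) (ψ (Fin.append y j)))
    (Φ : Fin k → Fin m → ℝ)
    (hΦ : ∀ a b, Φ a b =
      φ (Fin.castAdd m a) (Fin.natAdd k b) 0 1 +
      φ (Fin.castAdd m a) (Fin.natAdd k b) 1 0 -
      φ (Fin.castAdd m a) (Fin.natAdd k b) 0 0 -
      φ (Fin.castAdd m a) (Fin.natAdd k b) 1 1)
    (Λ : ℝ)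
    (hΛ : Λ = ∑ l ∈ Finset.range k, ((2 : ℝ) ^ (l + 1))⁻¹ *
      ∑ A ∈ Finset.powersetCard (l + 1) (Finset.univ : Finset (Fin k)),
        (if h : A.card = l + 1 then
          ∑ s : Fin l → Bool,
            ∏ b : Fin m,
              Real.cos ((t / 2) * (Φ (A.orderEmbOfFin h 0) b +
                ∑ i : Fin l, (if s i then (-1 : ℝ) else 1) *
                  Φ (A.orderEmbOfFin h i.succ) b)) ^ 2
         else 0)) :
    2 * (1 - ∑ x : Fin k → Fin 2, ∑ y : Fin k → Fin 2, ‖ρ x y‖ ^ 2) =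
      ((2 : ℝ) ^ k - 1) / (2 : ℝ) ^ (k - 1) - (2 : ℝ) ^ ((2 : ℤ) - (k : ℤ)) * Λ := by
  classical
  have hsum : ∑ x : Fin k → Fin 2, ∑ y : Fin k → Fin 2, ‖ρ x y‖ ^ 2
      = ((4 : ℝ) ^ k)⁻¹ * ∑ p : Fin k → Fin 2 × Fin 2, QGEMAux.F t Φ p := by
    rw [Finset.sum_congr rfl fun x _ => Finset.sum_congr rfl fun y _ =>
      QGEMAux.rho_abs_sq φ t phiJ hphiJ ψ hψ ρ hρ Φ hΦ x y]
    simp only [← Finset.mul_sum]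
    congr 1
    have hps : (∑ p : Fin k → Fin 2 × Fin 2, QGEMAux.F t Φ p)
        = ∑ pr : (Fin k → Fin 2) × (Fin k → Fin 2),
            QGEMAux.G m t fun b => ∑ a : Fin k, (((pr.2 a : ℕ) : ℝ) - ((pr.1 a : ℕ) : ℝ)) * Φ a b := by
      refine Fintype.sum_equiv (Equiv.arrowProdEquivProdArrow (Fin k) (fun _ => Fin 2) (fun _ => Fin 2))
        _ _ fun p => ?_
      rfl
    rw [hps, Fintype.sum_prod_type]
  rw [hsum, QGEMAux.comb_sum t Φ, ← hΛ]
  have hP : ((2 : ℝ) ^ k) ≠ 0 := by positivity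
  have h4k : ((4 : ℝ) ^ k) = 2 ^ k * 2 ^ k := by
    rw [show (4 : ℝ) = 2 * 2 by norm_num, mul_pow]
  have hk1 : ((2 : ℝ) ^ (k - 1)) = 2 ^ k / 2 := by
    rw [eq_div_iff (by norm_num : (2 : ℝ) ≠ 0), ← pow_succ]
    congr 1
    omega
  have hz : ((2 : ℝ) ^ ((2 : ℤ) - (k : ℤ))) = 4 / 2 ^ k := by
    rw [zpow_sub₀ (by norm_num : (2 : ℝ) ≠ 0)]
    norm_num [zpow_natCast]
  rw [h4k, hk1, hz]
  field_simp
  ring
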